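/- For every c > 0 and every ξ ∈ ℝ, ∫_ℝ cos(ξx)/(x² + c) dx = (π/√c)·e^{−√c·|ξ|}. -/

import Mathlib

open MeasureTheory Set Filter Real Complex FourierTransform
open scoped Topology

lemma cexp_hasDeriv (a : ℂ) (x : ℝ) :
    HasDerivAt (fun y : ℝ => Complex.exp (a * y)) (a * Complex.exp (a * x)) x := by
  have h : HasDerivAt (fun z : ℂ => Complex.exp (a * z)) (Complex.exp (a * (x:ℂ)) * (a * 1)) (x : ℂ) :=
    ((hasDerivAt_id (x : ℂ)).const_mul a).cexp
  simpa [mul_comm] using h.comp_ofReal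

lemma integral_cexp_Ioi {a : ℂ} (ha : a.re < 0) :
    ∫ x : ℝ in Ioi 0, Complex.exp (a * x) = -a⁻¹ := by
  have ha0 : a ≠ 0 := fun h => by simp [h] at ha
  have hint : IntegrableOn (fun x : ℝ => Complex.exp (a * x)) (Ioi 0) := by
    have hb : (0:ℝ) < -a.re := by linarith
    apply Integrable.mono' ((exp_neg_integrableOn_Ioi 0 hb))
    · exact (Complex.continuous_exp.comp
        (continuous_const.mul Complex.continuous_ofReal)).aestronglyMeasurable
    · filter_upwards with x
      simp [Complex.norm_exp, neg_mul, mul_comm]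
  have hderiv : ∀ x ∈ Ici (0:ℝ),
      HasDerivAt (fun y : ℝ => a⁻¹ * Complex.exp (a * y)) (Complex.exp (a * x)) x := by
    intro x _
    have := (cexp_hasDeriv a x).const_mul a⁻¹
    simpa [← mul_assoc, inv_mul_cancel₀ ha0] using this
  have htend : Tendsto (fun x : ℝ => a⁻¹ * Complex.exp (a * x)) atTop (𝓝 0) := by
    rw [tendsto_zero_iff_norm_tendsto_zero]
    have h1 : Tendsto (fun x : ℝ => a.re * x) atTop atBot := by
      have h0 := (tendsto_id (α := ℝ)).const_mul_atTop (by linarith : (0:ℝ) < -a.re)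
      have := tendsto_neg_atTop_atBot.comp h0
      refine this.congr fun x => ?_
      simp [Function.comp]
    have h2 : Tendsto (fun x : ℝ => Real.exp (a.re * x)) atTop (𝓝 0) :=
      Real.tendsto_exp_atBot.comp h1
    have : (fun x : ℝ => ‖a⁻¹ * Complex.exp (a * x)‖)
        = fun x : ℝ => ‖a⁻¹‖ * Real.exp (a.re * x) := by
      funext x; simp [Complex.norm_exp]
    rw [this]
    simpa using h2.const_mul ‖a⁻¹‖
  have := integral_Ioi_of_hasDerivAt_of_tendsto' hderiv hint htend
  simpa using this

noncomputable def ff : ℝ → ℂ := fun x => (Real.exp (-|x|) : ℂ)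

lemma ff_cont : Continuous ff :=
  Complex.continuous_ofReal.comp (Real.continuous_exp.comp continuous_abs.neg)

lemma ff_int : Integrable ff := by
  rw [← integrable_norm_iff ff_cont.aestronglyMeasurable]
  have : (fun x : ℝ => ‖ff x‖) = fun x => Real.exp (-|x|) := by
    funext x; simp [ff, Complex.norm_exp]
  rw [this]
  have h1 : IntegrableOn (fun x : ℝ => Real.exp (-|x|)) (Ioi 0) := by
    apply (exp_neg_integrableOn_Ioi 0 one_pos).congr_fun ?_ measurableSet_Ioi
    intro x hx; simp [abs_of_pos (mem_Ioi.mp hx)]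
  have h2 : IntegrableOn (fun x : ℝ => Real.exp (-|x|)) (Iic 0) := by
    apply (integrableOn_exp_Iic 0).congr_fun ?_ measurableSet_Iic
    intro x hx; simp [abs_of_nonpos (mem_Iic.mp hx)]
  have := (h2.union h1).mono_set (by rw [Iic_union_Ioi] : (univ : Set ℝ) ⊆ Iic 0 ∪ Ioi 0)
  exact integrableOn_univ.mp this

lemma ff_fourier (ξ : ℝ) : 𝓕 ff ξ = ((2 / (1 + (2 * π * ξ) ^ 2) : ℝ) : ℂ) := by
  rw [Real.fourier_real_eq_integral_exp_smul]
  have hI : Integrable (fun v : ℝ => Complex.exp (↑(-2 * π * v * ξ) * Complex.I) • ff v) := by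
    apply Integrable.mono' ff_int.norm
    · apply Continuous.aestronglyMeasurable
      exact (Complex.continuous_exp.comp ((Complex.continuous_ofReal.comp (by continuity)).mul
        continuous_const)).smul ff_cont
    · filter_upwards with x
      simp [Complex.norm_exp]
  have hIic : ∫ x : ℝ in Iic 0, Complex.exp ((1 - 2 * π * ξ * Complex.I) * x)
      = ∫ x : ℝ in Ioi 0, Complex.exp (-(1 - 2 * π * ξ * Complex.I) * x) := by
    rw [show (0:ℝ) = -0 by norm_num, ← integral_comp_neg_Ioi]
    rw [neg_zero]
    apply setIntegral_congr_fun measurableSet_Ioi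
    intro x _
    show Complex.exp _ = _
    congr 1
    push_cast
    ring
  have key : ∫ v : ℝ, Complex.exp (↑(-2 * π * v * ξ) * Complex.I) • ff v
      = (∫ x : ℝ in Iic 0, Complex.exp ((1 - 2 * π * ξ * Complex.I) * x))
        + ∫ x : ℝ in Ioi 0, Complex.exp ((-1 - 2 * π * ξ * Complex.I) * x) := by
    rw [← intervalIntegral.integral_Iic_add_Ioi (b := (0:ℝ))]
    · congr 1
      · apply setIntegral_congr_fun measurableSet_Iic
        intro x hx
        have hxx : |x| = -x := abs_of_nonpos (mem_Iic.mp hx)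
        show Complex.exp _ • ff x = _
        rw [smul_eq_mul]
        simp only [ff, hxx]
        rw [show ((rexp (-(-x)) : ℝ) : ℂ) = Complex.exp ((-(-x) : ℝ) : ℂ) from Complex.ofReal_exp _,
          ← Complex.exp_add]
        congr 1
        push_cast
        ring
      · apply setIntegral_congr_fun measurableSet_Ioi
        intro x hx
        have hxx : |x| = x := abs_of_pos (mem_Ioi.mp hx)
        show Complex.exp _ • ff x = _
        rw [smul_eq_mul]
        simp only [ff, hxx]
        rw [show ((rexp (-x) : ℝ) : ℂ) = Complex.exp ((-x : ℝ) : ℂ) from Complex.ofReal_exp _,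
          ← Complex.exp_add]
        congr 1
        push_cast
        ring
    · exact hI.integrableOn
    · exact hI.integrableOn
  rw [key, hIic]
  rw [integral_cexp_Ioi (by simp : (-(1 - 2 * (π:ℂ) * ξ * Complex.I)).re < 0),
    integral_cexp_Ioi (by simp : ((-1 - 2 * (π:ℂ) * ξ * Complex.I)).re < 0)]
  have h1 : (1 : ℂ) - 2 * π * ξ * Complex.I ≠ 0 := fun h => by
    simpa using congrArg Complex.re h
  have h2 : (-1 : ℂ) - 2 * π * ξ * Complex.I ≠ 0 := fun h => by
    simpa using congrArg Complex.re h
  have h2' : (1:ℂ) + 2 * π * ξ * Complex.I ≠ 0 := fun h => by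
    simpa using congrArg Complex.re h
  rw [neg_inv, neg_neg, show ((-1:ℂ) - 2 * π * ξ * Complex.I) = -(1 + 2 * π * ξ * Complex.I) by ring,
    neg_inv, neg_neg, inv_add_inv h1 h2']
  rw [show ((1:ℂ) - 2 * π * ξ * Complex.I) + (1 + 2 * π * ξ * Complex.I) = 2 by ring]
  rw [show ((1:ℂ) - 2 * π * ξ * Complex.I) * (1 + 2 * π * ξ * Complex.I)
      = 1 + (2 * (π:ℂ) * ξ) ^ 2 by linear_combination (-((2 * (π:ℂ) * ξ) ^ 2)) * Complex.I_sq]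
  push_cast
  ring

lemma r_int : Integrable (fun x : ℝ => 2 / (1 + (2 * π * x) ^ 2)) := by
  have h : Integrable (fun y : ℝ => 2 / (1 + y ^ 2)) := by
    simpa [div_eq_mul_inv, mul_comm] using integrable_inv_one_add_sq.const_mul 2
  simpa using h.comp_mul_left' (R := 2 * π) (by positivity : (2*π:ℝ) ≠ 0)

lemma key_cos (ξ : ℝ) :
    ∫ x : ℝ, Real.cos (2 * π * x * ξ) * (2 / (1 + (2 * π * x) ^ 2)) = Real.exp (-|ξ|) := by
  have hFf : 𝓕 ff = fun x : ℝ => ((2 / (1 + (2 * π * x) ^ 2) : ℝ) : ℂ) := funext ff_fourier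
  have hFf_int : Integrable (𝓕 ff) := by rw [hFf]; exact r_int.ofReal
  have hinv := ff_int.fourierInv_fourier_eq hFf_int (ff_cont.continuousAt (x := ξ))
  rw [Real.fourierInv_eq_fourier_neg, Real.fourier_real_eq_integral_exp_smul, hFf] at hinv
  have hint : Integrable (fun v : ℝ =>
      Complex.exp (↑(-2 * π * v * -ξ) * Complex.I) • ((2 / (1 + (2 * π * v) ^ 2) : ℝ) : ℂ)) := by
    apply Integrable.mono' r_int.norm
    · apply Continuous.aestronglyMeasurable
      apply Continuous.fun_smul
      · exact Complex.continuous_exp.comp ((Complex.continuous_ofReal.comp (by continuity)).mul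
          continuous_const)
      · exact Complex.continuous_ofReal.comp (by
          apply Continuous.div continuous_const
          · continuity
          · intro x; positivity)
    · filter_upwards with x
      rw [norm_smul, Complex.norm_real]
      simp [Complex.norm_exp]
  beta_reduce at hinv
  have hre : ∫ x : ℝ, (Complex.exp (↑(-2 * π * x * -ξ) * Complex.I)
      • ((2 / (1 + (2 * π * x) ^ 2) : ℝ) : ℂ)).re = rexp (-|ξ|) := by
    have h := integral_re hint
    simp only [RCLike.re_to_complex] at h
    rw [h, hinv]
    simp only [ff, Complex.ofReal_re]
  rw [← hre]
  apply integral_congr_ae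
  filter_upwards with x
  rw [smul_eq_mul, Complex.mul_re]
  simp only [Complex.ofReal_re, Complex.ofReal_im, mul_zero, sub_zero,
    Complex.exp_ofReal_mul_I_re]
  ring_nf

lemma cos_one_add_sq (b : ℝ) :
    ∫ u : ℝ, Real.cos (b * u) / (1 + u ^ 2) = π * rexp (-|b|) := by
  have h1 := MeasureTheory.Measure.integral_comp_mul_left
    (fun u : ℝ => Real.cos (u * b) * (2 / (1 + u ^ 2))) (2 * π)
  beta_reduce at h1
  rw [key_cos b] at h1
  have e : (fun u : ℝ => Real.cos (u * b) * (2 / (1 + u ^ 2)))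
      = fun u : ℝ => 2 * (Real.cos (b * u) / (1 + u ^ 2)) := by
    funext u; rw [mul_comm u b]; ring
  rw [e, integral_const_mul] at h1
  rw [smul_eq_mul, abs_of_pos (by positivity : (0:ℝ) < (2*π)⁻¹)] at h1
  have hπ : (0:ℝ) < π := Real.pi_pos
  field_simp at h1
  linarith

/-- For every `c > 0` and every `ξ ∈ ℝ`, the absolutely convergent
Lebesgue integral `∫_ℝ cos(ξx)/(x² + c) dx` equals `(π/√c)·e^{−√c·|ξ|}`. -/
theorem integral_cos_div_sq_add_const (c : ℝ) (hc : 0 < c) (ξ : ℝ) :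
    Integrable (fun x : ℝ => Real.cos (ξ * x) / (x ^ 2 + c)) ∧
    ∫ x : ℝ, Real.cos (ξ * x) / (x ^ 2 + c) =
      (Real.pi / Real.sqrt c) * Real.exp (-(Real.sqrt c) * |ξ|) := by
  have hs : 0 < Real.sqrt c := Real.sqrt_pos.mpr hc
  have hs2 : Real.sqrt c * Real.sqrt c = c := Real.mul_self_sqrt hc.le
  constructor
  · set K : ℝ := max 1 c⁻¹ with hK
    have hK1 : (1:ℝ) ≤ K := le_max_left _ _
    have hKc : c⁻¹ ≤ K := le_max_right _ _
    apply Integrable.mono' (integrable_inv_one_add_sq.const_mul K)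
    · apply Continuous.aestronglyMeasurable
      exact (Real.continuous_cos.comp (continuous_const.mul continuous_id)).div
        (by continuity) (fun x => by positivity)
    · filter_upwards with x
      have hx : (0:ℝ) < x ^ 2 + c := by positivity
      have h1 : |Real.cos (ξ * x) / (x ^ 2 + c)| ≤ 1 / (x ^ 2 + c) := by
        rw [abs_div, abs_of_pos hx]
        gcongr
        exact Real.abs_cos_le_one _
      refine h1.trans ?_
      have hKc1 : (1:ℝ) ≤ K * c := by
        have h := mul_le_mul_of_nonneg_right hKc hc.le
        rwa [inv_mul_cancel₀ hc.ne'] at h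
      rw [show K * (1 + x ^ 2)⁻¹ = K / (1 + x ^ 2) by ring,
        div_le_div_iff₀ hx (by positivity)]
      nlinarith [sq_nonneg x]
  · have h1 := MeasureTheory.Measure.integral_comp_mul_left
      (fun v : ℝ => Real.cos (ξ * v) / (v ^ 2 + c)) (Real.sqrt c)
    beta_reduce at h1
    have e : (fun u : ℝ => Real.cos (ξ * (Real.sqrt c * u)) / ((Real.sqrt c * u) ^ 2 + c))
        = fun u : ℝ => c⁻¹ * (Real.cos ((Real.sqrt c * ξ) * u) / (1 + u ^ 2)) := by
      funext u
      rw [show ξ * (Real.sqrt c * u) = Real.sqrt c * ξ * u by ring,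
        show (Real.sqrt c * u) ^ 2 + c = c * (1 + u ^ 2) by
          rw [mul_pow, Real.sq_sqrt hc.le]; ring]
      have h1u : (1:ℝ) + u ^ 2 ≠ 0 := by positivity
      field_simp
    rw [e, integral_const_mul, cos_one_add_sq] at h1
    rw [smul_eq_mul, abs_of_pos (by positivity : (0:ℝ) < (Real.sqrt c)⁻¹)] at h1
    have habs : |Real.sqrt c * ξ| = Real.sqrt c * |ξ| := by
      rw [abs_mul, abs_of_pos hs]
    rw [habs] at h1
    have h2 : ∫ x : ℝ, Real.cos (ξ * x) / (x ^ 2 + c)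
        = Real.sqrt c * (c⁻¹ * (π * rexp (-(Real.sqrt c * |ξ|)))) := by
      rw [← inv_mul_eq_iff_eq_mul₀ hs.ne', ← h1]
    rw [h2, neg_mul]
    rw [div_eq_mul_inv π (Real.sqrt c)]
    have : Real.sqrt c * c⁻¹ = (Real.sqrt c)⁻¹ := by
      field_simp
      exact Real.sq_sqrt hc.le
    rw [show Real.sqrt c * (c⁻¹ * (π * rexp (-(Real.sqrt c * |ξ|))))
        = (Real.sqrt c * c⁻¹) * (π * rexp (-(Real.sqrt c * |ξ|))) by ring, this]
    ring
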